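/- If Player 2 has a winning strategy in the d-round Q-bisimulation game on pointed Kripke models (M,w) and (N,v), then (M,w) and (N,v) satisfy the same formulas of PL(Q) of modal depth at most d. Equivalently (contrapositively): if some formula of PL(Q) of modal depth at most d distinguishes (M,w) from (N,v), then Player 1 has a winning strategy in the d-round Q-bisimulation game. -/
import Mathlib


/-- A Kripke model over proposition symbols `P` with node set `V`. -/
structure Kripke (P V : Type) where
  succ : V → Finset V
  label : V → P → Prop

/-- Formulas of `PL(𝒬)`: propositional logic extended with generalized modalities
indexed by `ι`. -/
inductive PLQ (P ι : Type) : Type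
  | bot : PLQ P ι
  | prop : P → PLQ P ι
  | neg : PLQ P ι → PLQ P ι
  | and : PLQ P ι → PLQ P ι → PLQ P ι
  | or : PLQ P ι → PLQ P ι → PLQ P ι
  | app : ι → PLQ P ι → PLQ P ι

/-- Modal depth of a `PL(𝒬)` formula. -/
def PLQ.md {P ι : Type} : PLQ P ι → ℕ
  | .bot => 0
  | .prop _ => 0
  | .neg φ => φ.md
  | .and φ ψ => max φ.md ψ.md
  | .or φ ψ => max φ.md ψ.md
  | .app _ φ => φ.md + 1

/-- Satisfaction of `PL(𝒬)` formulas. A generalized quantifier is an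
isomorphism-closed class of structures `(D, P)` with `P ⊆ D`, so it is determined by
the pair of cardinalities `(|D|, |P|)`; accordingly the family `𝒬` is given as
`Q : ι → ℕ → ℕ → Prop`, and `M,v ⊨ ⟨Q i⟩φ` iff
`(N(v), {u ∈ N(v) : M,u ⊨ φ}) ∈ Q i`, i.e. `Q i |N(v)| |{u ∈ N(v) : M,u ⊨ φ}|`. -/
def Kripke.SatQ {P V ι : Type} (M : Kripke P V) (Q : ι → ℕ → ℕ → Prop) :
    PLQ P ι → V → Prop
  | .bot, _ => False
  | .prop p, v => M.label v p
  | .neg φ, v => ¬ M.SatQ Q φ v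
  | .and φ ψ, v => M.SatQ Q φ v ∧ M.SatQ Q ψ v
  | .or φ ψ, v => M.SatQ Q φ v ∨ M.SatQ Q ψ v
  | .app i φ, v => Q i (M.succ v).card {u | u ∈ M.succ v ∧ M.SatQ Q φ u}.ncard

/-- Disjoint union `M ⊔ N` of two Kripke models. -/
def Kripke.sum {P V W : Type} (M : Kripke P V) (N : Kripke P W) : Kripke P (V ⊕ W) where
  succ := fun x => match x with
    | .inl a => (M.succ a).map ⟨Sum.inl, Sum.inl_injective⟩
    | .inr b => (N.succ b).map ⟨Sum.inr, Sum.inr_injective⟩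
  label := fun x p => match x with
    | .inl a => M.label a p
    | .inr b => N.label b p

/-- `AttWin K Q d a b` : the player currently in the attacker role has a winning
strategy in the `d`-round `𝒬`-bisimulation game from position `(a, b)` (both pebbles on
nodes of the single model `K`, e.g. a disjoint union). The attacker wins immediately if
the pebbled nodes disagree on a proposition symbol; otherwise the attacker selects a
pebble `u` (the other being `v`), a modality `⟨Q i⟩`, a set `X ⊆ N(u)` with
`(N(u),X) ∈ Q i`, and a set `P' ⊆ N(v)`; the defender may contest `X` or `P'`
(moving the pebbles as prescribed), or reply with `X' ⊆ N(v)` with `(N(v),X') ∈ Q i`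
and `P' ⊆ X'`, after which the attacker may contest `X'` (becoming the defender), move
to `N(v) \ X'` × `X` (becoming the defender), or move one pebble into `X'` with the
defender answering in `X ∪ P'`. (By determinacy of this finite game, the defender,
i.e. Player 2, has a winning strategy iff `AttWin` fails.) -/
def AttWin {P V ι : Type} [DecidableEq V] (K : Kripke P V) (Q : ι → ℕ → ℕ → Prop) :
    ℕ → V → V → Prop
  | 0, a, b => ¬ ∀ p, K.label a p ↔ K.label b p
  | (d+1), a, b => (¬ ∀ p, K.label a p ↔ K.label b p) ∨
      ∃ u v : V, ((u, v) = (a, b) ∨ (u, v) = (b, a)) ∧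
      ∃ (i : ι) (X P' : Finset V), X ⊆ K.succ u ∧ Q i (K.succ u).card X.card ∧
        P' ⊆ K.succ v ∧
        (∀ x ∈ X, ∀ y ∈ K.succ u \ X, AttWin K Q d x y) ∧
        (∀ y ∈ P', ∀ x ∈ K.succ u, AttWin K Q d x y) ∧
        (∀ X' : Finset V, X' ⊆ K.succ v → Q i (K.succ v).card X'.card → P' ⊆ X' →
          (∃ y ∈ X', ∃ z ∈ K.succ v \ X', ¬ AttWin K Q d y z) ∨
          (∃ y ∈ K.succ v \ X', ∃ x ∈ X, ¬ AttWin K Q d x y) ∨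
          (∃ y ∈ X', ∀ x, (x ∈ X ∨ x ∈ P') → AttWin K Q d x y))

/-- `Player 2 (the defender) has a winning strategy in the `d`-round `𝒬`-bisimulation
game from position `(a,b)` (via determinacy of the finite game). -/
def DefWin {P V ι : Type} [DecidableEq V] (K : Kripke P V) (Q : ι → ℕ → ℕ → Prop)
    (d : ℕ) (a b : V) : Prop := ¬ AttWin K Q d a b

/-- `CharSat K Q d w v` : `v` satisfies the canonical `𝒬`-characteristic depth-`d`
formula `φ^{𝒬,d}_{K,w}` of `w`. At depth 0 this is the full propositional agreement
with `w`; at depth `d+1` it additionally requires, for every modality `⟨Q i⟩` and every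
set `C` of depth-`d` characteristic formulas of nodes of `K` (encoded by the set `S` of
nodes whose characteristic formulas constitute `C`, so that a node `u` satisfies `⋁C`
iff `∃ x ∈ S, CharSat K Q d x u`), that `⟨Q i⟩(⋁C)` holds at `v` iff it holds at `w`. -/
def CharSat {P V ι : Type} (K : Kripke P V) (Q : ι → ℕ → ℕ → Prop) :
    ℕ → V → V → Prop
  | 0, w, v => ∀ p, K.label w p ↔ K.label v p
  | (d+1), w, v => (∀ p, K.label w p ↔ K.label v p) ∧
      ∀ (i : ι) (S : Set V),
        (Q i (K.succ w).card
            {u | u ∈ K.succ w ∧ ∃ x ∈ S, CharSat K Q d x u}.ncard ↔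
         Q i (K.succ v).card
            {u | u ∈ K.succ v ∧ ∃ x ∈ S, CharSat K Q d x u}.ncard)

section
variable {P V ι : Type} {K : Kripke P V} {Q : ι → ℕ → ℕ → Prop}

theorem charsat_refl (d : ℕ) (w : V) : CharSat K Q d w w := by
  cases d with
  | zero => exact fun p => Iff.rfl
  | succ d => exact ⟨fun p => Iff.rfl, fun i S => Iff.rfl⟩

theorem charsat_symm {d : ℕ} {w v : V} (h : CharSat K Q d w v) : CharSat K Q d v w := by
  cases d with
  | zero => exact fun p => (h p).symm
  | succ d => exact ⟨fun p => (h.1 p).symm, fun i S => (h.2 i S).symm⟩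

theorem charsat_trans {d : ℕ} {a b c : V} (h1 : CharSat K Q d a b)
    (h2 : CharSat K Q d b c) : CharSat K Q d a c := by
  cases d with
  | zero => exact fun p => (h1 p).trans (h2 p)
  | succ d => exact ⟨fun p => (h1.1 p).trans (h2.1 p), fun i S => (h1.2 i S).trans (h2.2 i S)⟩

theorem charsat_label {d : ℕ} {w v : V} (h : CharSat K Q d w v) (p : P) :
    K.label w p ↔ K.label v p := by
  cases d with
  | zero => exact h p
  | succ d => exact h.1 p

end

section
variable {P V ι : Type} {K : Kripke P V} {Q : ι → ℕ → ℕ → Prop}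

lemma def_step [DecidableEq V] {d : ℕ} {u v : V}
    (IH : ∀ a b : V, CharSat K Q d a b ↔ ¬ AttWin K Q d a b)
    (hc : CharSat K Q (d+1) u v)
    {i : ι} {X P' : Finset V} (hXs : X ⊆ K.succ u) (hQX : Q i (K.succ u).card X.card)
    (hPs : P' ⊆ K.succ v)
    (H1 : ∀ x ∈ X, ∀ y ∈ K.succ u \ X, AttWin K Q d x y)
    (H2 : ∀ y ∈ P', ∀ x ∈ K.succ u, AttWin K Q d x y)
    (H3 : ∀ X' : Finset V, X' ⊆ K.succ v → Q i (K.succ v).card X'.card → P' ⊆ X' →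
          (∃ y ∈ X', ∃ z ∈ K.succ v \ X', ¬ AttWin K Q d y z) ∨
          (∃ y ∈ K.succ v \ X', ∃ x ∈ X, ¬ AttWin K Q d x y) ∨
          (∃ y ∈ X', ∀ x, (x ∈ X ∨ x ∈ P') → AttWin K Q d x y)) : False := by
  classical
  set S : Set V := ↑X ∪ ↑P' with hS
  have hmemS : ∀ x : V, x ∈ S ↔ (x ∈ X ∨ x ∈ P') := by
    intro x; simp [hS]
  set X' : Finset V := (K.succ v).filter (fun y => ∃ x ∈ S, CharSat K Q d x y) with hX'
  have hA : {x | x ∈ K.succ u ∧ ∃ s ∈ S, CharSat K Q d s x} = (↑X : Set V) := by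
    ext y
    simp only [Set.mem_setOf_eq, Finset.mem_coe]
    constructor
    · rintro ⟨hy, s, hsS, hcs⟩
      rcases (hmemS s).mp hsS with hsX | hsP
      · by_contra hyX
        exact (IH s y).mp hcs (H1 s hsX y (Finset.mem_sdiff.mpr ⟨hy, hyX⟩))
      · exact absurd (H2 s hsP y hy) ((IH y s).mp (charsat_symm hcs))
    · intro hyX
      exact ⟨hXs hyX, y, (hmemS y).mpr (Or.inl hyX), charsat_refl d y⟩
  have h1 : {x | x ∈ K.succ u ∧ ∃ s ∈ S, CharSat K Q d s x}.ncard = X.card := by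
    rw [hA, Set.ncard_coe_finset]
  have h2 : {x | x ∈ K.succ v ∧ ∃ s ∈ S, CharSat K Q d s x}.ncard = X'.card := by
    rw [← Set.ncard_coe_finset]
    congr 1
    ext y
    simp [hX']
  have hQX' : Q i (K.succ v).card X'.card := by
    have hiff := hc.2 i S
    rw [h1, h2] at hiff
    exact hiff.mp hQX
  have hPX' : P' ⊆ X' := by
    intro y hy
    exact Finset.mem_filter.mpr ⟨hPs hy, y, (hmemS y).mpr (Or.inr hy), charsat_refl d y⟩
  rcases H3 X' (Finset.filter_subset _ _) hQX' hPX' with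
    ⟨y, hyX', z, hz, hnA⟩ | ⟨y, hy, x, hxX, hnA⟩ | ⟨y, hyX', hall⟩
  · have hyz : CharSat K Q d y z := (IH y z).mpr hnA
    obtain ⟨hyv, s, hsS, hsy⟩ := Finset.mem_filter.mp hyX'
    have hz2 := Finset.mem_sdiff.mp hz
    exact hz2.2 (Finset.mem_filter.mpr ⟨hz2.1, s, hsS, charsat_trans hsy hyz⟩)
  · have hxy : CharSat K Q d x y := (IH x y).mpr hnA
    have hy2 := Finset.mem_sdiff.mp hy
    exact hy2.2 (Finset.mem_filter.mpr ⟨hy2.1, x, (hmemS x).mpr (Or.inl hxX), hxy⟩)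
  · obtain ⟨hyv, s, hsS, hsy⟩ := Finset.mem_filter.mp hyX'
    exact (IH s y).mp hsy (hall s ((hmemS s).mp hsS))

lemma attack_step [DecidableEq V] {d : ℕ} {u v : V}
    (IH : ∀ a b : V, CharSat K Q d a b ↔ ¬ AttWin K Q d a b)
    {i : ι} {S : Set V}
    (hQu : Q i (K.succ u).card {x | x ∈ K.succ u ∧ ∃ s ∈ S, CharSat K Q d s x}.ncard)
    (hQv : ¬ Q i (K.succ v).card {x | x ∈ K.succ v ∧ ∃ s ∈ S, CharSat K Q d s x}.ncard) :
    ∃ (i : ι) (X P' : Finset V), X ⊆ K.succ u ∧ Q i (K.succ u).card X.card ∧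
        P' ⊆ K.succ v ∧
        (∀ x ∈ X, ∀ y ∈ K.succ u \ X, AttWin K Q d x y) ∧
        (∀ y ∈ P', ∀ x ∈ K.succ u, AttWin K Q d x y) ∧
        (∀ X' : Finset V, X' ⊆ K.succ v → Q i (K.succ v).card X'.card → P' ⊆ X' →
          (∃ y ∈ X', ∃ z ∈ K.succ v \ X', ¬ AttWin K Q d y z) ∨
          (∃ y ∈ K.succ v \ X', ∃ x ∈ X, ¬ AttWin K Q d x y) ∨
          (∃ y ∈ X', ∀ x, (x ∈ X ∨ x ∈ P') → AttWin K Q d x y)) := by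
  classical
  set X : Finset V := (K.succ u).filter (fun x => ∃ s ∈ S, CharSat K Q d s x) with hXdef
  set B : Finset V := (K.succ v).filter (fun x => ∃ s ∈ S, CharSat K Q d s x) with hBdef
  set P' : Finset V := (K.succ v).filter
    (fun y => (∃ s ∈ S, CharSat K Q d s y) ∧ ∀ x ∈ K.succ u, ¬ CharSat K Q d x y) with hPdef
  have hXcard : {x | x ∈ K.succ u ∧ ∃ s ∈ S, CharSat K Q d s x}.ncard = X.card := by
    rw [← Set.ncard_coe_finset]; congr 1; ext y; simp [hXdef]
  have hBcard : {x | x ∈ K.succ v ∧ ∃ s ∈ S, CharSat K Q d s x}.ncard = B.card := by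
    rw [← Set.ncard_coe_finset]; congr 1; ext y; simp [hBdef]
  refine ⟨i, X, P', Finset.filter_subset _ _, by rwa [hXcard] at hQu,
    Finset.filter_subset _ _, ?_, ?_, ?_⟩
  · intro x hx y hy
    obtain ⟨hxu, s, hsS, hsx⟩ := Finset.mem_filter.mp hx
    have hy2 := Finset.mem_sdiff.mp hy
    by_contra hnA
    have hxy : CharSat K Q d x y := (IH x y).mpr hnA
    exact hy2.2 (Finset.mem_filter.mpr ⟨hy2.1, s, hsS, charsat_trans hsx hxy⟩)
  · intro y hy x hx
    obtain ⟨hyv, -, hnone⟩ := Finset.mem_filter.mp hy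
    by_contra hnA
    exact hnone x hx ((IH x y).mpr hnA)
  · intro X' hX's hQ' hPX'
    by_cases hcase : ∃ y ∈ X', ∀ x, (x ∈ X ∨ x ∈ P') → ¬ CharSat K Q d x y
    · obtain ⟨y, hy, hno⟩ := hcase
      refine Or.inr (Or.inr ⟨y, hy, fun x hx => ?_⟩)
      by_contra hnA
      exact hno x hx ((IH x y).mpr hnA)
    · push_neg at hcase
      have hX'B : X' ⊆ B := by
        intro y hy
        obtain ⟨x, hx, hxy⟩ := hcase y hy
        rcases hx with hxX | hxP
        · obtain ⟨hxu, s, hsS, hsx⟩ := Finset.mem_filter.mp hxX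
          exact Finset.mem_filter.mpr ⟨hX's hy, s, hsS, charsat_trans hsx hxy⟩
        · obtain ⟨hxv, ⟨s, hsS, hsx⟩, -⟩ := Finset.mem_filter.mp hxP
          exact Finset.mem_filter.mpr ⟨hX's hy, s, hsS, charsat_trans hsx hxy⟩
      have hne : X' ≠ B := by
        intro h
        rw [hBcard] at hQv
        rw [h] at hQ'
        exact hQv hQ'
      obtain ⟨z, hzB, hzX'⟩ : ∃ z ∈ B, z ∉ X' := by
        by_contra h
        push_neg at h
        exact hne (Finset.Subset.antisymm hX'B h)
      obtain ⟨hzv, s, hsS, hsz⟩ := Finset.mem_filter.mp hzB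
      have hzP : z ∉ P' := fun h => hzX' (hPX' h)
      have hx0 : ∃ x0 ∈ K.succ u, CharSat K Q d x0 z := by
        by_contra h
        push_neg at h
        exact hzP (Finset.mem_filter.mpr ⟨hzv, ⟨s, hsS, hsz⟩, h⟩)
      obtain ⟨x0, hx0u, hx0z⟩ := hx0
      have hx0X : x0 ∈ X :=
        Finset.mem_filter.mpr ⟨hx0u, s, hsS, charsat_trans hsz (charsat_symm hx0z)⟩
      exact Or.inr (Or.inl ⟨z, Finset.mem_sdiff.mpr ⟨hzv, hzX'⟩, x0, hx0X, (IH x0 z).mp hx0z⟩)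

theorem charsat_iff_not_attwin [DecidableEq V] (d : ℕ) (a b : V) :
    CharSat K Q d a b ↔ ¬ AttWin K Q d a b := by
  induction d generalizing a b with
  | zero =>
    constructor
    · intro h hA; exact hA h
    · intro h; exact not_not.mp h
  | succ d IH =>
    constructor
    · intro hc hA
      rcases hA with hlab | ⟨u, v, huv, hmv⟩
      · exact hlab (fun p => charsat_label hc p)
      · rcases huv with h | h <;> rw [Prod.mk.injEq] at h <;> obtain ⟨rfl, rfl⟩ := h
        · obtain ⟨i, X, P', h1, h2, h3, h4, h5, h6⟩ := hmv
          exact def_step IH hc h1 h2 h3 h4 h5 h6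
        · obtain ⟨i, X, P', h1, h2, h3, h4, h5, h6⟩ := hmv
          exact def_step IH (charsat_symm hc) h1 h2 h3 h4 h5 h6
    · intro hnA
      by_contra hnc
      apply hnA
      rcases Classical.em (∀ p, K.label a p ↔ K.label b p) with hlab | hlab
      · have hh : ¬ ∀ (i : ι) (S : Set V),
            (Q i (K.succ a).card {u | u ∈ K.succ a ∧ ∃ x ∈ S, CharSat K Q d x u}.ncard ↔
             Q i (K.succ b).card {u | u ∈ K.succ b ∧ ∃ x ∈ S, CharSat K Q d x u}.ncard) :=
          fun h => hnc ⟨hlab, h⟩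
        push_neg at hh
        obtain ⟨i, S, hne⟩ := hh
        rcases hne with ⟨hQa, hQb⟩ | ⟨hQa, hQb⟩
        · exact Or.inr ⟨a, b, Or.inl rfl, attack_step IH hQa hQb⟩
        · exact Or.inr ⟨b, a, Or.inr rfl, attack_step IH hQb hQa⟩
      · exact Or.inl hlab

end

section
variable {P V ι : Type} {K : Kripke P V} {Q : ι → ℕ → ℕ → Prop}

theorem sat_agree_of_charsat (φ : PLQ P ι) :
    ∀ (d : ℕ), φ.md ≤ d → ∀ w v : V, CharSat K Q d w v →
      (K.SatQ Q φ w ↔ K.SatQ Q φ v) := by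
  induction φ with
  | bot => intro d _ w v _; exact Iff.rfl
  | prop p => intro d _ w v h; exact charsat_label h p
  | neg φ ih =>
    intro d hd w v h
    exact not_congr (ih d hd w v h)
  | and φ ψ ihφ ihψ =>
    intro d hd w v h
    exact and_congr (ihφ d (le_trans (le_max_left _ _) hd) w v h)
      (ihψ d (le_trans (le_max_right _ _) hd) w v h)
  | or φ ψ ihφ ihψ =>
    intro d hd w v h
    exact or_congr (ihφ d (le_trans (le_max_left _ _) hd) w v h)
      (ihψ d (le_trans (le_max_right _ _) hd) w v h)
  | app i ψ ih =>
    intro d hd w v h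
    obtain ⟨e, rfl⟩ : ∃ e, d = e + 1 := by
      cases d with
      | zero => exact absurd hd (by simp [PLQ.md])
      | succ e => exact ⟨e, rfl⟩
    have hde : ψ.md ≤ e := Nat.succ_le_succ_iff.mp hd
    have key : ∀ x : V, {u | u ∈ K.succ x ∧ ∃ s ∈ {y : V | K.SatQ Q ψ y}, CharSat K Q e s u}
        = {u | u ∈ K.succ x ∧ K.SatQ Q ψ u} := by
      intro x
      ext y
      simp only [Set.mem_setOf_eq]
      constructor
      · rintro ⟨hy, s, hs, hcs⟩
        exact ⟨hy, (ih e hde s y hcs).mp hs⟩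
      · rintro ⟨hy, hs⟩
        exact ⟨hy, y, hs, charsat_refl e y⟩
    have hiff := h.2 i {y : V | K.SatQ Q ψ y}
    rw [key w, key v] at hiff
    exact hiff

end

section
variable {P V W ι : Type} {M : Kripke P V} {N : Kripke P W} {Q : ι → ℕ → ℕ → Prop}

theorem sat_sum (φ : PLQ P ι) :
    (∀ a : V, (M.sum N).SatQ Q φ (Sum.inl a) ↔ M.SatQ Q φ a) ∧
    (∀ b : W, (M.sum N).SatQ Q φ (Sum.inr b) ↔ N.SatQ Q φ b) := by
  induction φ with
  | bot => exact ⟨fun a => Iff.rfl, fun b => Iff.rfl⟩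
  | prop p => exact ⟨fun a => Iff.rfl, fun b => Iff.rfl⟩
  | neg φ ih => exact ⟨fun a => not_congr (ih.1 a), fun b => not_congr (ih.2 b)⟩
  | and φ ψ ihφ ihψ =>
    exact ⟨fun a => and_congr (ihφ.1 a) (ihψ.1 a), fun b => and_congr (ihφ.2 b) (ihψ.2 b)⟩
  | or φ ψ ihφ ihψ =>
    exact ⟨fun a => or_congr (ihφ.1 a) (ihψ.1 a), fun b => or_congr (ihφ.2 b) (ihψ.2 b)⟩
  | app i ψ ih =>
    constructor
    · intro a
      show Q i ((M.sum N).succ (Sum.inl a)).card _ ↔ Q i (M.succ a).card _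
      have hsucc : (M.sum N).succ (Sum.inl a) = (M.succ a).map ⟨Sum.inl, Sum.inl_injective⟩ := rfl
      rw [hsucc, Finset.card_map]
      have hset : {u | u ∈ (M.succ a).map ⟨Sum.inl, Sum.inl_injective⟩ ∧ (M.sum N).SatQ Q ψ u}
          = Sum.inl '' {u | u ∈ M.succ a ∧ M.SatQ Q ψ u} := by
        ext x
        simp only [Set.mem_setOf_eq, Set.mem_image, Finset.mem_map,
          Function.Embedding.coeFn_mk]
        constructor
        · rintro ⟨⟨y, hy, rfl⟩, hsat⟩
          exact ⟨y, ⟨hy, (ih.1 y).mp hsat⟩, rfl⟩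
        · rintro ⟨y, ⟨hy, hsat⟩, rfl⟩
          exact ⟨⟨y, hy, rfl⟩, (ih.1 y).mpr hsat⟩
      rw [hset, Set.ncard_image_of_injective _ Sum.inl_injective]
    · intro b
      show Q i ((M.sum N).succ (Sum.inr b)).card _ ↔ Q i (N.succ b).card _
      have hsucc : (M.sum N).succ (Sum.inr b) = (N.succ b).map ⟨Sum.inr, Sum.inr_injective⟩ := rfl
      rw [hsucc, Finset.card_map]
      have hset : {u | u ∈ (N.succ b).map ⟨Sum.inr, Sum.inr_injective⟩ ∧ (M.sum N).SatQ Q ψ u}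
          = Sum.inr '' {u | u ∈ N.succ b ∧ N.SatQ Q ψ u} := by
        ext x
        simp only [Set.mem_setOf_eq, Set.mem_image, Finset.mem_map,
          Function.Embedding.coeFn_mk]
        constructor
        · rintro ⟨⟨y, hy, rfl⟩, hsat⟩
          exact ⟨y, ⟨hy, (ih.2 y).mp hsat⟩, rfl⟩
        · rintro ⟨y, ⟨hy, hsat⟩, rfl⟩
          exact ⟨⟨y, hy, rfl⟩, (ih.2 y).mpr hsat⟩
      rw [hset, Set.ncard_image_of_injective _ Sum.inr_injective]

end


/-- if some `PL(𝒬)` formula of modal depth at most `d` distinguishes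
`(M,w)` from `(N,v)`, then Player 1 (the attacker) has a winning strategy in the
`d`-round `𝒬`-bisimulation game; equivalently, a winning strategy for Player 2 implies
that `(M,w)` and `(N,v)` satisfy the same `PL(𝒬)` formulas of depth at most `d`. -/
theorem distinguishing_formula_implies_attacker_win
    {P V W ι : Type} [Fintype V] [Fintype W] [DecidableEq V] [DecidableEq W]
    (M : Kripke P V) (N : Kripke P W) (Q : ι → ℕ → ℕ → Prop) (w : V) (v : W) (d : ℕ)
    (h : ∃ φ : PLQ P ι, φ.md ≤ d ∧ ¬ (M.SatQ Q φ w ↔ N.SatQ Q φ v)) :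
    AttWin (M.sum N) Q d (Sum.inl w) (Sum.inr v) := by
  classical
  obtain ⟨φ, hmd, hne⟩ := h
  have hsum : ¬ ((M.sum N).SatQ Q φ (Sum.inl w) ↔ (M.sum N).SatQ Q φ (Sum.inr v)) := by
    intro hiff
    exact hne (((sat_sum φ).1 w).symm.trans (hiff.trans ((sat_sum φ).2 v)))
  have hncs : ¬ CharSat (M.sum N) Q d (Sum.inl w) (Sum.inr v) := by
    intro hcs
    exact hsum (sat_agree_of_charsat φ d hmd _ _ hcs)
  by_contra hA
  exact hncs ((charsat_iff_not_attwin d _ _).mpr hA)
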